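/- Let q ≥ 2 and N ≥ 1 be integers, let G be a finite group of order (qN)², and let H be a finite group of order q with identity 1. Let Σ be a set of (q−1)N subgroups of G, each of order qN, any two distinct members intersecting in {1}; let Σ be partitioned into sets Σ_i of size N indexed by i ∈ H∖{1}; let D_i := (⋃ Σ_i) ∖ {1} for i ≠ 1 and D_1 := G ∖ ⋃_{i≠1} D_i. Fix z ∈ G with z ≠ 1 and let k ∈ H be the unique element with z ∈ D_k. Then |(D_1·z⁻¹) ∩ D_1| = (N + 1 − δ_{1k})·(N − δ_{1k}) + δ_{1k}·qN, where δ_{1k} = 1 if k = 1 and 0 otherwise, and D_1·z⁻¹ := {d·z⁻¹ : d ∈ D_1}. -/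

import Mathlib

open Finset

lemma fac_exists {G : Type*} [Group G] [Fintype G]
    (X Y : Subgroup G) (hXY : X ⊓ Y = ⊥)
    (hcard : Nat.card X * Nat.card Y = Fintype.card G) (g : G) :
    ∃ x : G, x ∈ X ∧ x * g ∈ Y := by
  classical
  have hinj : Function.Injective (fun p : X × Y => (p.1 : G) * p.2) := by
    rintro ⟨a, b⟩ ⟨a', b'⟩ h
    simp only at h
    have key : (a' : G)⁻¹ * a = (b' : G) * (b : G)⁻¹ := by
      rw [inv_mul_eq_iff_eq_mul, ← mul_assoc, ← h, mul_assoc, mul_inv_cancel, mul_one]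
    have h1 : ((a' : G)⁻¹ * (a : G)) ∈ X := X.mul_mem (X.inv_mem a'.2) a.2
    have h2 : ((a' : G)⁻¹ * (a : G)) ∈ Y := by
      rw [key]; exact Y.mul_mem b'.2 (Y.inv_mem b.2)
    have hbot : ((a' : G)⁻¹ * (a : G)) ∈ X ⊓ Y := ⟨h1, h2⟩
    rw [hXY, Subgroup.mem_bot] at hbot
    have ha : (a : G) = a' := by rwa [inv_mul_eq_one, eq_comm] at hbot
    have hb : (b : G) = b' := by
      have h' := h; rw [ha] at h'; exact mul_left_cancel h'
    exact Prod.ext (Subtype.ext ha) (Subtype.ext hb)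
  have hbij : Function.Bijective (fun p : X × Y => (p.1 : G) * p.2) := by
    rw [Fintype.bijective_iff_injective_and_card]
    refine ⟨hinj, ?_⟩
    rw [Fintype.card_prod, ← Nat.card_eq_fintype_card, ← Nat.card_eq_fintype_card, hcard]
  obtain ⟨⟨a, b⟩, hab⟩ := hbij.2 g
  refine ⟨(a : G)⁻¹, X.inv_mem a.2, ?_⟩
  simp only at hab
  rw [← hab, inv_mul_cancel_left]
  exact b.2

lemma fac_unique {G : Type*} [Group G] (X Y : Subgroup G) (hXY : X ⊓ Y = ⊥) (g : G)
    {x x' : G} (hx : x ∈ X) (hx' : x' ∈ X) (hy : x * g ∈ Y) (hy' : x' * g ∈ Y) : x = x' := by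
  have h1 : x' * x⁻¹ ∈ X := X.mul_mem hx' (X.inv_mem hx)
  have h2 : x' * x⁻¹ ∈ Y := by
    have : x' * x⁻¹ = (x' * g) * (x * g)⁻¹ := by group
    rw [this]; exact Y.mul_mem hy' (Y.inv_mem hy)
  have hbot : x' * x⁻¹ ∈ X ⊓ Y := ⟨h1, h2⟩
  rw [hXY, Subgroup.mem_bot] at hbot
  rw [mul_inv_eq_one] at hbot
  exact hbot.symm

theorem card_D11 {G H : Type*} [Group G] [Fintype G] [Group H] [Fintype H] [DecidableEq H]
    (q N : ℕ) (hq : 2 ≤ q) (hN : 1 ≤ N)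
    (hG : Fintype.card G = (q * N) ^ 2) (hH : Fintype.card H = q)
    (S : H → Finset (Subgroup G))
    (hScard : ∀ i : H, i ≠ 1 → (S i).card = N)
    (hSdisj : ∀ i j : H, i ≠ 1 → j ≠ 1 → i ≠ j → Disjoint (S i) (S j))
    (hSorder : ∀ i : H, i ≠ 1 → ∀ X ∈ S i, Nat.card X = q * N)
    (hSint : ∀ i j : H, i ≠ 1 → j ≠ 1 → ∀ X ∈ S i, ∀ Y ∈ S j, X ≠ Y → X ⊓ Y = ⊥)
    (D : H → Set G)
    (hD : ∀ i : H, i ≠ 1 → D i = (⋃ X ∈ S i, (X : Set G)) \ {1})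
    (hD1 : D 1 = Set.univ \ ⋃ i ∈ {i : H | i ≠ 1}, D i)
    (z : G) (hz : z ≠ 1) (k : H) (hk : z ∈ D k) :
    (((fun d => d * z⁻¹) '' D 1 ∩ D 1).ncard : ℤ) =
        ((N : ℤ) + 1 - if k = 1 then 1 else 0) * ((N : ℤ) - if k = 1 then 1 else 0)
          + (if k = 1 then 1 else 0) * (q * N) := by
  classical
  set m := q * N with hm
  have hm2 : 2 ≤ m := le_trans hq (Nat.le_mul_of_pos_right q hN)
  -- the collection of all spread members
  set σ : Finset (Subgroup G) := (Finset.univ.filter (fun i : H => i ≠ 1)).biUnion S with hσdef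
  have hσmem : ∀ X : Subgroup G, X ∈ σ ↔ ∃ i : H, i ≠ 1 ∧ X ∈ S i := by
    intro X; simp [hσdef]
  have hσcard : σ.card = (q - 1) * N := by
    rw [hσdef, Finset.card_biUnion (fun i hi j hj hij =>
      hSdisj i j (by simpa using hi) (by simpa using hj) hij)]
    rw [Finset.sum_congr rfl (fun i hi => hScard i (by simpa using hi)),
      Finset.sum_const, smul_eq_mul]
    congr 1
    rw [Finset.filter_ne', Finset.card_erase_of_mem (Finset.mem_univ _), Finset.card_univ, hH]
  have hσorder : ∀ X ∈ σ, Nat.card X = m := by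
    intro X hX
    obtain ⟨i, hi, hXS⟩ := (hσmem X).1 hX
    exact hSorder i hi X hXS
  have hσint : ∀ X ∈ σ, ∀ Y ∈ σ, X ≠ Y → X ⊓ Y = ⊥ := by
    intro X hX Y hY hXY
    obtain ⟨i, hi, hXS⟩ := (hσmem X).1 hX
    obtain ⟨j, hj, hYS⟩ := (hσmem Y).1 hY
    exact hSint i j hi hj X hXS Y hYS hXY
  have hσuniq : ∀ x : G, x ≠ 1 → ∀ X ∈ σ, ∀ Y ∈ σ, x ∈ X → x ∈ Y → X = Y := by
    intro x hx1 X hX Y hY hxX hxY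
    by_contra hne
    have := hσint X hX Y hY hne
    have : x ∈ X ⊓ Y := ⟨hxX, hxY⟩
    rw [hσint X hX Y hY hne, Subgroup.mem_bot] at this
    exact hx1 this
  -- Finset versions of the subgroups
  set fX : Subgroup G → Finset G := fun X => (X : Set G).toFinset with hfXdef
  have hfXmem : ∀ (X : Subgroup G) (x : G), x ∈ fX X ↔ x ∈ X := by
    intro X x; simp [hfXdef]
  have hfXcard : ∀ X ∈ σ, (fX X).card = m := by
    intro X hX
    have h1 : (fX X).card = (X : Set G).ncard := (Set.ncard_eq_toFinset_card' _).symm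
    have h2 : (X : Set G).ncard = Nat.card X := by
      rw [← Nat.card_coe_set_eq, SetLike.coe_sort_coe]
    rw [h1, h2, hσorder X hX]
  -- the union of the nonidentity elements of the spread members
  set A : Finset G := σ.biUnion (fun X => (fX X).erase 1) with hAdef
  have hAmem : ∀ x : G, x ∈ A ↔ (x ≠ 1 ∧ ∃ X ∈ σ, x ∈ X) := by
    intro x
    simp only [hAdef, Finset.mem_biUnion, Finset.mem_erase, hfXmem]
    tauto
  have hAdisj : ∀ X ∈ σ, ∀ Y ∈ σ, X ≠ Y →
      Disjoint ((fX X).erase 1) ((fX Y).erase 1) := by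
    intro X hX Y hY hne
    rw [Finset.disjoint_left]
    intro x hx hy
    rw [Finset.mem_erase, hfXmem] at hx hy
    exact hne (hσuniq x hx.1 X hX Y hY hx.2 hy.2)
  have hAcard : A.card = σ.card * (m - 1) := by
    rw [hAdef, Finset.card_biUnion hAdisj]
    rw [Finset.sum_congr rfl (fun X hX => by
      rw [Finset.card_erase_of_mem ((hfXmem X 1).2 (one_mem X)), hfXcard X hX])]
    rw [Finset.sum_const, smul_eq_mul]
  -- D 1 as a finset
  set B : Finset G := Finset.univ \ A with hBdef
  have hD1B : D 1 = (B : Set G) := by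
    have hU : (⋃ i ∈ {i : H | i ≠ 1}, D i) = (A : Set G) := by
      ext x
      simp only [Set.mem_iUnion, Set.mem_setOf_eq, Finset.mem_coe]
      constructor
      · rintro ⟨i, hi, hx⟩
        rw [hD i hi] at hx
        obtain ⟨hxU, hx1⟩ := hx
        simp only [Set.mem_iUnion] at hxU
        obtain ⟨X, hXS, hxX⟩ := hxU
        exact (hAmem x).2 ⟨by simpa using hx1, X, (hσmem X).2 ⟨i, hi, hXS⟩, hxX⟩
      · intro hx
        obtain ⟨hx1, X, hXσ, hxX⟩ := (hAmem x).1 hx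
        obtain ⟨i, hi, hXS⟩ := (hσmem X).1 hXσ
        refine ⟨i, hi, ?_⟩
        rw [hD i hi]
        refine ⟨?_, by simpa using hx1⟩
        simp only [Set.mem_iUnion]
        exact ⟨X, hXS, hxX⟩
    rw [hD1, hU, hBdef]
    simp [Set.ext_iff]
  -- reduce the goal to a Finset card computation
  have hinj : Function.Injective (fun d : G => d * z⁻¹) := fun a b hab => by
    simpa using mul_right_cancel hab
  have hEset : ((fun d => d * z⁻¹) '' D 1 ∩ D 1) =
      ((B.image (fun d => d * z⁻¹) ∩ B : Finset G) : Set G) := by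
    rw [hD1B, ← Finset.coe_image, ← Finset.coe_inter]
  rw [hEset, Set.ncard_coe_finset]
  set A' : Finset G := A.image (fun d => d * z⁻¹) with hA'def
  have hA'mem : ∀ x : G, x ∈ A' ↔ x * z ∈ A := by
    intro x
    simp only [hA'def, Finset.mem_image]
    constructor
    · rintro ⟨a, ha, rfl⟩
      simpa using ha
    · intro h
      exact ⟨x * z, h, by simp⟩
  have hBimg : B.image (fun d : G => d * z⁻¹) = Finset.univ \ A' := by
    rw [hBdef, Finset.image_sdiff _ _ hinj, hA'def]
    congr 1
    apply Finset.image_univ_of_surjective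
    intro g
    exact ⟨g * z, by simp⟩
  set C : Finset G := A' ∩ A with hCdef
  have hEcard : (B.image (fun d : G => d * z⁻¹) ∩ B).card = Fintype.card G - (A' ∪ A).card := by
    rw [hBimg, hBdef, ← Finset.sdiff_union_distrib, Finset.card_sdiff_of_subset (Finset.subset_univ _),
      Finset.card_univ]
  have hunion : (A' ∪ A).card + C.card = A.card + A.card := by
    rw [hCdef, Finset.card_union_add_card_inter, hA'def,
      Finset.card_image_of_injective _ hinj]
  have hCmem : ∀ x : G, x ∈ C ↔ x ∈ A ∧ x * z ∈ A := by
    intro x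
    rw [hCdef, Finset.mem_inter, hA'mem]
    tauto
  -- the pieces
  set c : Subgroup G → Subgroup G → Finset G := fun X Y =>
    ((fX X).erase 1) ∩ (((fX Y).erase 1).image (fun d => d * z⁻¹)) with hcdef
  have hcmem : ∀ (X Y : Subgroup G) (x : G),
      x ∈ c X Y ↔ (x ∈ X ∧ x ≠ 1) ∧ (x * z ∈ Y ∧ x * z ≠ 1) := by
    intro X Y x
    simp only [hcdef, Finset.mem_inter, Finset.mem_erase, Finset.mem_image, hfXmem]
    constructor
    · rintro ⟨⟨hx1, hxX⟩, a, ⟨ha1, haY⟩, hax⟩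
      have haeq : a = x * z := by rw [← hax]; simp
      subst haeq
      exact ⟨⟨hxX, hx1⟩, haY, ha1⟩
    · rintro ⟨⟨hxX, hx1⟩, hxzY, hxz1⟩
      exact ⟨⟨hx1, hxX⟩, x * z, ⟨hxz1, hxzY⟩, by simp⟩
  have hCeq : C = (σ ×ˢ σ).biUnion (fun p => c p.1 p.2) := by
    ext x
    rw [hCmem x]
    constructor
    · rintro ⟨hxA, hxzA⟩
      obtain ⟨hx1, X, hXσ, hxX⟩ := (hAmem x).1 hxA
      obtain ⟨hxz1, Y, hYσ, hxzY⟩ := (hAmem _).1 hxzA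
      exact Finset.mem_biUnion.2
        ⟨(X, Y), Finset.mem_product.2 ⟨hXσ, hYσ⟩, (hcmem X Y x).2 ⟨⟨hxX, hx1⟩, hxzY, hxz1⟩⟩
    · intro hmem
      obtain ⟨⟨X, Y⟩, hp, hx⟩ := Finset.mem_biUnion.1 hmem
      rw [Finset.mem_product] at hp
      obtain ⟨⟨hxX, hx1⟩, hxzY, hxz1⟩ := (hcmem X Y x).1 hx
      exact ⟨(hAmem x).2 ⟨hx1, X, hp.1, hxX⟩, (hAmem _).2 ⟨hxz1, Y, hp.2, hxzY⟩⟩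
  have hCcard : C.card = ∑ X ∈ σ, ∑ Y ∈ σ, (c X Y).card := by
    rw [hCeq, Finset.card_biUnion, Finset.sum_product]
    rintro ⟨X, Y⟩ hp ⟨X', Y'⟩ hp' hne
    rw [Finset.mem_coe, Finset.mem_product] at hp hp'
    rw [Function.onFun, Finset.disjoint_left]
    intro x hx hx'
    obtain ⟨⟨hxX, hx1⟩, hxzY, hxz1⟩ := (hcmem X Y x).1 hx
    obtain ⟨⟨hxX', _⟩, hxzY', _⟩ := (hcmem X' Y' x).1 hx'
    exact hne (Prod.ext (hσuniq x hx1 X hp.1 X' hp'.1 hxX hxX')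
      (hσuniq (x * z) hxz1 Y hp.2 Y' hp'.2 hxzY hxzY'))
  -- cardinalities of the pieces
  have hdiag1 : ∀ X ∈ σ, z ∈ X → (c X X).card = m - 2 := by
    intro X hX hzX
    have hset : c X X = ((fX X).erase 1).erase z⁻¹ := by
      ext x
      rw [hcmem X X x, Finset.mem_erase, Finset.mem_erase, hfXmem]
      constructor
      · rintro ⟨⟨hxX, hx1⟩, hxzX, hxz1⟩
        refine ⟨fun h => hxz1 (by rw [h]; simp), hx1, hxX⟩
      · rintro ⟨hxz, hx1, hxX⟩
        exact ⟨⟨hxX, hx1⟩, X.mul_mem hxX hzX, fun h => hxz (eq_inv_of_mul_eq_one_left h)⟩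
    rw [hset, Finset.card_erase_of_mem, Finset.card_erase_of_mem ((hfXmem X 1).2 (one_mem X)),
      hfXcard X hX]
    · omega
    · rw [Finset.mem_erase, hfXmem]
      exact ⟨inv_ne_one.2 hz, X.inv_mem hzX⟩
  have hdiag0 : ∀ X ∈ σ, z ∉ X → (c X X).card = 0 := by
    intro X hX hzX
    rw [Finset.card_eq_zero, Finset.eq_empty_iff_forall_notMem]
    intro x hx
    obtain ⟨⟨hxX, _⟩, hxzX, _⟩ := (hcmem X X x).1 hx
    exact hzX (by simpa using X.mul_mem (X.inv_mem hxX) hxzX)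
  have hoffX : ∀ X ∈ σ, ∀ Y ∈ σ, X ≠ Y → z ∈ X → (c X Y).card = 0 := by
    intro X hX Y hY hne hzX
    rw [Finset.card_eq_zero, Finset.eq_empty_iff_forall_notMem]
    intro x hx
    obtain ⟨⟨hxX, _⟩, hxzY, hxz1⟩ := (hcmem X Y x).1 hx
    have hxzX : x * z ∈ X := X.mul_mem hxX hzX
    have : x * z ∈ X ⊓ Y := ⟨hxzX, hxzY⟩
    rw [hσint X hX Y hY hne, Subgroup.mem_bot] at this
    exact hxz1 this
  have hoffY : ∀ X ∈ σ, ∀ Y ∈ σ, X ≠ Y → z ∈ Y → (c X Y).card = 0 := by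
    intro X hX Y hY hne hzY
    rw [Finset.card_eq_zero, Finset.eq_empty_iff_forall_notMem]
    intro x hx
    obtain ⟨⟨hxX, hx1⟩, hxzY, _⟩ := (hcmem X Y x).1 hx
    have hxY : x ∈ Y := by simpa using Y.mul_mem hxzY (Y.inv_mem hzY)
    have : x ∈ X ⊓ Y := ⟨hxX, hxY⟩
    rw [hσint X hX Y hY hne, Subgroup.mem_bot] at this
    exact hx1 this
  have hoff1 : ∀ X ∈ σ, ∀ Y ∈ σ, X ≠ Y → z ∉ X → z ∉ Y → (c X Y).card = 1 := by
    intro X hX Y hY hne hzX hzY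
    have hbot := hσint X hX Y hY hne
    obtain ⟨x₀, hx₀X, hx₀zY⟩ := fac_exists X Y hbot
      (by rw [hσorder X hX, hσorder Y hY, hG, sq]) z
    rw [Finset.card_eq_one]
    refine ⟨x₀, ?_⟩
    rw [Finset.eq_singleton_iff_unique_mem]
    constructor
    · refine (hcmem X Y x₀).2 ⟨⟨hx₀X, fun h => hzY ?_⟩, hx₀zY, fun h => hzX ?_⟩
      · rw [h] at hx₀zY; simpa using hx₀zY
      · rw [eq_inv_of_mul_eq_one_left h] at hx₀X
        simpa using X.inv_mem hx₀X
    · intro x hx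
      obtain ⟨⟨hxX, _⟩, hxzY, _⟩ := (hcmem X Y x).1 hx
      exact fac_unique X Y hbot z hxX hx₀X hxzY hx₀zY
  -- common cast facts
  have hq1 : 1 ≤ q := by omega
  have hM1 : 1 ≤ σ.card := by
    rw [hσcard]; exact Nat.one_le_iff_ne_zero.2 (Nat.mul_ne_zero (by omega) (by omega))
  have key : ((B.image (fun d : G => d * z⁻¹) ∩ B).card : ℤ)
      = ((m : ℤ))^2 - 2*(A.card : ℤ) + (C.card : ℤ) := by
    have hle : (A' ∪ A).card ≤ Fintype.card G := by
      rw [← Finset.card_univ]; exact Finset.card_le_univ _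
    have h2 : ((A' ∪ A).card : ℤ) = 2*(A.card : ℤ) - (C.card : ℤ) := by omega
    rw [hEcard, Nat.cast_sub hle, hG, h2]
    push_cast
    ring
  have hAZ : (A.card : ℤ) = ((q:ℤ)-1)*(N:ℤ)*((q:ℤ)*(N:ℤ)-1) := by
    rw [hAcard, hσcard]
    push_cast [Nat.cast_sub hq1, Nat.cast_sub (le_trans (by norm_num) hm2 : 1 ≤ q * N), hm]
    ring
  have hMZ : ((σ.card : ℕ) : ℤ) = ((q:ℤ)-1)*(N:ℤ) := by
    rw [hσcard]; push_cast [Nat.cast_sub hq1]; ring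
  by_cases hk1 : k = 1
  · -- z is outside every spread member
    subst hk1
    rw [hD1B] at hk
    have hzB : z ∉ A := by
      rw [Finset.mem_coe, hBdef, Finset.mem_sdiff] at hk
      exact hk.2
    have hznot : ∀ X ∈ σ, z ∉ X := fun X hX hzX => hzB ((hAmem z).2 ⟨hz, X, hX, hzX⟩)
    have hinner : ∀ X ∈ σ, ∑ Y ∈ σ, (c X Y).card = σ.card - 1 := by
      intro X hX
      rw [← Finset.add_sum_erase σ _ hX, hdiag0 X hX (hznot X hX), zero_add]
      rw [Finset.sum_congr rfl (fun Y hY => hoff1 X hX Y (Finset.mem_of_mem_erase hY)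
        (Ne.symm (Finset.mem_erase.1 hY).1) (hznot X hX)
        (hznot Y (Finset.mem_of_mem_erase hY)))]
      rw [Finset.sum_const, smul_eq_mul, mul_one, Finset.card_erase_of_mem hX]
    have hC1 : C.card = σ.card * (σ.card - 1) := by
      rw [hCcard, Finset.sum_congr rfl hinner, Finset.sum_const, smul_eq_mul]
    have hCZ : (C.card : ℤ) = ((σ.card : ℤ)) * ((σ.card : ℤ) - 1) := by
      rw [hC1]; push_cast [Nat.cast_sub hM1]; ring
    rw [if_pos rfl, key, hAZ, hCZ, hMZ, hm]
    push_cast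
    ring
  · -- z lies in a unique spread member X₀
    rw [hD k hk1] at hk
    obtain ⟨hzU, _⟩ := hk
    simp only [Set.mem_iUnion] at hzU
    obtain ⟨X₀, hX₀S, hzX₀⟩ := hzU
    have hX₀σ : X₀ ∈ σ := (hσmem X₀).2 ⟨k, hk1, hX₀S⟩
    have hznot : ∀ X ∈ σ, X ≠ X₀ → z ∉ X := fun X hX hne hzX =>
      hne (hσuniq z hz X hX X₀ hX₀σ hzX hzX₀)
    have hinner0 : ∑ Y ∈ σ, (c X₀ Y).card = m - 2 := by
      rw [← Finset.add_sum_erase σ _ hX₀σ, hdiag1 X₀ hX₀σ hzX₀]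
      rw [Finset.sum_congr rfl (fun Y hY => hoffX X₀ hX₀σ Y (Finset.mem_of_mem_erase hY)
        (Ne.symm (Finset.mem_erase.1 hY).1) hzX₀)]
      simp
    have hinner : ∀ X ∈ σ, X ≠ X₀ → ∑ Y ∈ σ, (c X Y).card = σ.card - 2 := by
      intro X hX hne
      rw [← Finset.add_sum_erase σ _ hX, hdiag0 X hX (hznot X hX hne), zero_add]
      have hX₀e : X₀ ∈ σ.erase X := Finset.mem_erase.2 ⟨Ne.symm hne, hX₀σ⟩
      rw [← Finset.add_sum_erase _ _ hX₀e, hoffY X hX X₀ hX₀σ hne hzX₀, zero_add]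
      rw [Finset.sum_congr rfl (fun Y hY => by
        have hY1 := Finset.mem_of_mem_erase hY
        exact hoff1 X hX Y (Finset.mem_of_mem_erase hY1)
          (Ne.symm (Finset.mem_erase.1 hY1).1) (hznot X hX hne)
          (hznot Y (Finset.mem_of_mem_erase hY1) (Finset.mem_erase.1 hY).1))]
      rw [Finset.sum_const, smul_eq_mul, mul_one, Finset.card_erase_of_mem hX₀e,
        Finset.card_erase_of_mem hX]
      omega
    have hC1 : C.card = (m - 2) + (σ.card - 1) * (σ.card - 2) := by
      rw [hCcard, ← Finset.add_sum_erase σ _ hX₀σ, hinner0]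
      rw [Finset.sum_congr rfl (fun X hX => hinner X (Finset.mem_of_mem_erase hX)
        (Finset.mem_erase.1 hX).1)]
      rw [Finset.sum_const, smul_eq_mul, Finset.card_erase_of_mem hX₀σ]
    have hcast2 : (((σ.card - 1) * (σ.card - 2) : ℕ) : ℤ)
        = ((σ.card : ℤ) - 1) * ((σ.card : ℤ) - 2) := by
      rcases Nat.lt_or_ge σ.card 2 with h | h
      · have h1 : σ.card = 1 := by omega
        rw [h1]; norm_num
      · push_cast [Nat.cast_sub (by omega : 1 ≤ σ.card), Nat.cast_sub h]
        ring
    have hCZ : (C.card : ℤ) = ((m:ℤ) - 2) + ((σ.card : ℤ) - 1) * ((σ.card : ℤ) - 2) := by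
      rw [hC1]
      push_cast [Nat.cast_sub hm2, hcast2]
      ring
    rw [if_neg hk1, key, hAZ, hCZ, hMZ, hm]
    push_cast
    ring
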